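/- arXiv:2605.07072 — 2 statements merged into one kernel-verified Lean document; each statement's English description precedes it below -/
import Mathlib

section
/- Fix an index pair a ≠ b in [n] and nonnegative reals u_1,...,u_n. Let v be obtained from u by replacing both u_a and u_b with their average (u_a+u_b)/2. Then for every r, the elementary symmetric polynomial satisfies e_r(u) ≤ e_r(v). -/
open Finset

lemma esymm_split {α : Type*} [DecidableEq α] (w : α → ℝ) (s : Finset α) {x : α}
    (hx : x ∉ s) (k : ℕ) :
    ∑ S ∈ (insert x s).powersetCard (k+1), ∏ i ∈ S, w i
      = (∑ S ∈ s.powersetCard (k+1), ∏ i ∈ S, w i)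
        + w x * ∑ S ∈ s.powersetCard k, ∏ i ∈ S, w i := by
  rw [powersetCard_succ_insert hx, sum_union, sum_image, mul_sum]
  · congr 1
    refine sum_congr rfl fun S hS => ?_
    rw [prod_insert (fun h => hx ((mem_powersetCard.1 hS).1 h))]
  · intro S hS T hT h
    have hxS : x ∉ S := fun h' => hx ((mem_powersetCard.1 hS).1 h')
    have hxT : x ∉ T := fun h' => hx ((mem_powersetCard.1 hT).1 h')
    rw [← erase_insert hxS, ← erase_insert hxT, h]
  · rw [disjoint_right]
    intro S hS hS'
    obtain ⟨T, hT, rfl⟩ := mem_image.1 hS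
    exact ((mem_powersetCard.1 hS').1 (mem_insert_self x T)) |> fun h => hx h

/-- Pairwise averaging does not decrease elementary symmetric polynomials of
nonnegative reals. -/
theorem esymm_le_of_pair_average (n r : ℕ) (a b : Fin n) (hab : a ≠ b)
    (u : Fin n → ℝ) (hu : ∀ i, 0 ≤ u i)
    (v : Fin n → ℝ)
    (hv : v = fun i => if i = a ∨ i = b then (u a + u b) / 2 else u i) :
    ∑ S ∈ Finset.univ.powersetCard r, ∏ i ∈ S, u i
      ≤ ∑ S ∈ Finset.univ.powersetCard r, ∏ i ∈ S, v i := by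
  have hva : v a = (u a + u b) / 2 := by simp [hv]
  have hvb : v b = (u a + u b) / 2 := by simp [hv]
  have hvU : ∀ i, i ≠ a → i ≠ b → v i = u i := by
    intro i h1 h2; simp [hv, h1, h2]
  set U : Finset (Fin n) := (Finset.univ.erase a).erase b with hU
  have hbU : b ∉ U := notMem_erase _ _
  have haU : a ∉ U := fun h => notMem_erase a _ (mem_of_mem_erase h)
  have hA : insert b U = Finset.univ.erase a := by
    rw [hU, insert_erase]
    exact mem_erase.2 ⟨hab.symm, mem_univ b⟩
  have haA : a ∉ insert b U := by rw [hA]; exact notMem_erase _ _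
  have huniv : insert a (insert b U) = (Finset.univ : Finset (Fin n)) := by
    rw [hA, insert_erase (mem_univ a)]
  have hprodeq : ∀ k, ∑ S ∈ U.powersetCard k, ∏ i ∈ S, v i
      = ∑ S ∈ U.powersetCard k, ∏ i ∈ S, u i := by
    intro k
    refine sum_congr rfl fun S hS => prod_congr rfl fun i hi => ?_
    have hiU : i ∈ U := (mem_powersetCard.1 hS).1 hi
    exact hvU i (fun h => haU (h ▸ hiU)) (fun h => hbU (h ▸ hiU))
  have hnn : ∀ k, 0 ≤ ∑ S ∈ U.powersetCard k, ∏ i ∈ S, u i := fun k =>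
    sum_nonneg fun S _ => prod_nonneg fun i _ => hu i
  have key : ∀ (w : Fin n → ℝ) (k : ℕ),
      ∑ S ∈ Finset.univ.powersetCard (k+2), ∏ i ∈ S, w i
        = (∑ S ∈ U.powersetCard (k+2), ∏ i ∈ S, w i)
          + (w a + w b) * (∑ S ∈ U.powersetCard (k+1), ∏ i ∈ S, w i)
          + w a * w b * (∑ S ∈ U.powersetCard k, ∏ i ∈ S, w i) := by
    intro w k
    rw [← huniv, esymm_split w _ haA (k+1), esymm_split w U hbU (k+1),
      esymm_split w U hbU k]
    ring
  match r with
  | 0 => simp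
  | 1 =>
    have h1 : ∀ (w : Fin n → ℝ),
        ∑ S ∈ Finset.univ.powersetCard 1, ∏ i ∈ S, w i
          = (∑ S ∈ U.powersetCard 1, ∏ i ∈ S, w i) + (w a + w b) := by
      intro w
      rw [← huniv, esymm_split w _ haA 0, esymm_split w U hbU 0]
      simp [Finset.powersetCard_zero]
      ring
    rw [h1 u, h1 v, hprodeq 1, hva, hvb]
    ring_nf
    linarith
  | (k+2) =>
    rw [key u k, key v k, hprodeq (k+2), hprodeq (k+1), hprodeq k, hva, hvb]
    have hab2 : u a * u b ≤ (u a + u b) / 2 * ((u a + u b) / 2) := by nlinarith [sq_nonneg (u a - u b)]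
    have := hnn k
    nlinarith [hnn (k+1), hnn k, mul_le_mul_of_nonneg_right hab2 (hnn k)]
end

section
/- With w_i = exp((2y_i − 1)/(2σ²)), the log-likelihood ratio for BIS satisfies log(P(y)/Q(y)) ≤ k · log((1/T) Σ_{i=1}^T w_i). -/
open Finset

/-- Tangent line inequality for `x ^ (n+1)` at `y`. -/
lemma pow_tangent_aux {x y : ℝ} (hx : 0 ≤ x) (hy : 0 ≤ y) (n : ℕ) :
    y ^ (n + 1) + (n + 1 : ℝ) * y ^ n * (x - y) ≤ x ^ (n + 1) := by
  rcases eq_or_lt_of_le hy with h0 | h0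
  · rcases Nat.eq_zero_or_pos n with hn | hn
    · subst hn; simp [← h0]
    · rw [← h0]
      rw [zero_pow hn.ne', zero_pow (Nat.succ_ne_zero n)]
      simpa using pow_nonneg hx (n + 1)
  · have hyne : y ≠ 0 := ne_of_gt h0
    have ha : (-2 : ℝ) ≤ (x - y) / y := by
      have : (-1 : ℝ) ≤ (x - y) / y := by
        rw [le_div_iff₀ h0]; linarith
      linarith
    have key := one_add_mul_le_pow ha (n + 1)
    have h1 : (1 : ℝ) + (x - y) / y = x / y := by field_simp; ring
    rw [h1] at key
    have := mul_le_mul_of_nonneg_left key (le_of_lt (pow_pos h0 (n + 1)))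
    calc y ^ (n + 1) + (n + 1 : ℝ) * y ^ n * (x - y)
        = y ^ (n + 1) * (1 + ((n : ℝ) + 1) * ((x - y) / y)) := by
          field_simp; ring
      _ ≤ y ^ (n + 1) * (x / y) ^ (n + 1) := by
          push_cast at this ⊢; linarith
      _ = x ^ (n + 1) := by
          rw [div_pow]
          field_simp
  
/-- Recurrence for elementary symmetric sums under `insert`. -/
lemma esymm_insert {α : Type*} [DecidableEq α] (w : α → ℝ) {x : α} {s : Finset α}
    (hx : x ∉ s) (n : ℕ) :
    ∑ A ∈ (insert x s).powersetCard (n + 1), ∏ i ∈ A, w i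
      = (∑ A ∈ s.powersetCard (n + 1), ∏ i ∈ A, w i)
        + w x * ∑ A ∈ s.powersetCard n, ∏ i ∈ A, w i := by
  have hdisj : Disjoint (s.powersetCard (n + 1)) ((s.powersetCard n).image (insert x)) := by
    rw [Finset.disjoint_left]
    intro A hA hA'
    obtain ⟨hAs, -⟩ := Finset.mem_powersetCard.mp hA
    obtain ⟨B, hB, rfl⟩ := Finset.mem_image.mp hA'
    exact hx (hAs (Finset.mem_insert_self x B))
  have hinj : ∀ A ∈ s.powersetCard n, ∀ B ∈ s.powersetCard n,
      insert x A = insert x B → A = B := by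
    intro A hA B hB h
    have hxA : x ∉ A := fun hc => hx ((Finset.mem_powersetCard.mp hA).1 hc)
    have hxB : x ∉ B := fun hc => hx ((Finset.mem_powersetCard.mp hB).1 hc)
    rw [← Finset.erase_insert hxA, ← Finset.erase_insert hxB, h]
  rw [Finset.powersetCard_succ_insert hx, Finset.sum_union hdisj,
    Finset.sum_image hinj, Finset.mul_sum]
  congr 1
  refine Finset.sum_congr rfl fun A hA => ?_
  have hxA : x ∉ A := fun hc => hx ((Finset.mem_powersetCard.mp hA).1 hc)
  rw [Finset.prod_insert hxA]

/-- Maclaurin-type inequality: `n^k e_k ≤ C(n,k) (∑ w)^k`. -/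
lemma maclaurin_aux {α : Type*} [DecidableEq α] (w : α → ℝ) (hw : ∀ i, 0 ≤ w i)
    (s : Finset α) : ∀ k : ℕ,
    (s.card : ℝ) ^ k * ∑ A ∈ s.powersetCard k, ∏ i ∈ A, w i
      ≤ (s.card.choose k : ℝ) * (∑ i ∈ s, w i) ^ k := by
  induction s using Finset.induction_on with
  | empty =>
    intro k
    match k with
    | 0 => simp
    | k + 1 => simp
  | insert x s' hx ih =>
    intro k
    match k with
    | 0 => simp
    | j + 1 =>
      have hcard : (insert x s').card = s'.card + 1 := Finset.card_insert_of_notMem hx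
      have hsum : ∑ i ∈ insert x s', w i = w x + ∑ i ∈ s', w i :=
        Finset.sum_insert hx
      rw [hcard, hsum, esymm_insert w hx j]
      set m := s'.card with hm
      set t := w x with ht
      set ss := ∑ i ∈ s', w i with hss
      have hss0 : 0 ≤ ss := Finset.sum_nonneg fun i _ => hw i
      have ht0 : 0 ≤ t := hw x
      set E1 := ∑ A ∈ s'.powersetCard (j + 1), ∏ i ∈ A, w i with hE1
      set E0 := ∑ A ∈ s'.powersetCard j, ∏ i ∈ A, w i with hE0
      have hE10 : 0 ≤ E1 := Finset.sum_nonneg fun A _ =>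
        Finset.prod_nonneg fun i _ => hw i
      have hE00 : 0 ≤ E0 := Finset.sum_nonneg fun A _ =>
        Finset.prod_nonneg fun i _ => hw i
      have ih1 := ih (j + 1)
      have ih0 := ih j
      rcases Nat.eq_zero_or_pos m with hm0 | hm0
      · -- s' is empty
        have hs' : s' = ∅ := Finset.card_eq_zero.mp hm0
        have hE1z : E1 = 0 := by
          rw [hE1, Finset.powersetCard_eq_empty.mpr (by rw [← hm]; omega),
            Finset.sum_empty]
        have hssz : ss = 0 := by rw [hss, hs', Finset.sum_empty]
        rcases Nat.eq_zero_or_pos j with hj0 | hj0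
        · subst hj0
          have hE0o : E0 = 1 := by
            rw [hE0, Finset.powersetCard_zero, Finset.sum_singleton, Finset.prod_empty]
          rw [hE1z, hE0o, hssz, hm0]
          norm_num
        · have hE0z : E0 = 0 := by
            rw [hE0, Finset.powersetCard_eq_empty.mpr (by rw [← hm]; omega),
              Finset.sum_empty]
          rw [hE1z, hE0z, hssz, hm0]
          have hc0 : ((0 + 1).choose (j + 1)) = 0 := Nat.choose_eq_zero_of_lt (by omega)
          rw [hc0]
          norm_num
      · -- main case: m ≥ 1
        have hmR : (0 : ℝ) < (m : ℝ) := by exact_mod_cast hm0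
        set a := ss / m with haa
        have ha0 : 0 ≤ a := div_nonneg hss0 (le_of_lt hmR)
        have hssa : ss = m * a := by rw [haa, mul_div_cancel₀ ss hmR.ne']
        clear_value a
        -- bounds from the induction hypothesis
        have b1 : E1 ≤ ((m.choose (j + 1) : ℝ)) * a ^ (j + 1) := by
          have hmk : (0 : ℝ) < (m : ℝ) ^ (j + 1) := pow_pos hmR _
          have h2 : ((m.choose (j + 1) : ℝ)) * a ^ (j + 1)
              = ((m.choose (j + 1) : ℝ) * ss ^ (j + 1)) / (m : ℝ) ^ (j + 1) := by
            rw [haa, div_pow]; ring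
          rw [hE1, h2, le_div_iff₀ hmk]
          calc (∑ A ∈ s'.powersetCard (j + 1), ∏ i ∈ A, w i) * (m : ℝ) ^ (j + 1)
              = (m : ℝ) ^ (j + 1) * ∑ A ∈ s'.powersetCard (j + 1), ∏ i ∈ A, w i :=
                mul_comm _ _
            _ ≤ _ := ih1
        have b0 : E0 ≤ ((m.choose j : ℝ)) * a ^ j := by
          have hmk : (0 : ℝ) < (m : ℝ) ^ j := pow_pos hmR _
          have h2 : ((m.choose j : ℝ)) * a ^ j
              = ((m.choose j : ℝ) * ss ^ j) / (m : ℝ) ^ j := by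
            rw [haa, div_pow]; ring
          rw [hE0, h2, le_div_iff₀ hmk]
          calc (∑ A ∈ s'.powersetCard j, ∏ i ∈ A, w i) * (m : ℝ) ^ j
              = (m : ℝ) ^ j * ∑ A ∈ s'.powersetCard j, ∏ i ∈ A, w i := mul_comm _ _
            _ ≤ _ := ih0
        -- tangent line inequality at x = (m*a+t)/(m+1), y = a
        set X := ((m : ℝ) * a + t) / ((m : ℝ) + 1) with hX
        have hX0 : 0 ≤ X := by
          rw [hX]
          apply div_nonneg
          · exact add_nonneg (mul_nonneg hmR.le ha0) ht0
          · linarith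
        clear_value X
        have tang := pow_tangent_aux hX0 ha0 j
        -- binomial identities
        have pascal : ((m + 1).choose (j + 1) : ℝ)
            = (m.choose (j + 1) : ℝ) + (m.choose j : ℝ) := by
          rw [Nat.choose_succ_succ]
          push_cast
          ring
        have hkc : ((j : ℝ) + 1) * ((m + 1).choose (j + 1) : ℝ)
            = ((m : ℝ) + 1) * (m.choose j : ℝ) := by
          have := Nat.add_one_mul_choose_eq m j
          have h2 : ((m + 1) * m.choose j : ℕ) = ((m + 1).choose (j + 1) * (j + 1) : ℕ) := by
            simpa [Nat.succ_eq_add_one] using this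
          have := congrArg (fun n : ℕ => (n : ℝ)) h2
          push_cast at this
          linarith
        have hXa : X - a = (t - a) / ((m : ℝ) + 1) := by
          rw [hX]
          field_simp
          ring
        -- key algebraic chain
        have key : (m.choose (j + 1) : ℝ) * a ^ (j + 1) + t * ((m.choose j : ℝ) * a ^ j)
            ≤ ((m + 1).choose (j + 1) : ℝ) * X ^ (j + 1) := by
          have h := mul_le_mul_of_nonneg_left tang
            (show (0:ℝ) ≤ ((m + 1).choose (j + 1) : ℝ) by positivity)
          calc (m.choose (j + 1) : ℝ) * a ^ (j + 1) + t * ((m.choose j : ℝ) * a ^ j)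
              = ((m + 1).choose (j + 1) : ℝ) *
                  (a ^ (j + 1) + ((j : ℝ) + 1) * a ^ j * (X - a)) := by
                rw [hXa]
                have hm1 : ((m : ℝ) + 1) ≠ 0 := ne_of_gt (by linarith)
                have hfrac : (((j : ℝ) + 1) * ((m + 1).choose (j + 1) : ℝ)) *
                    ((t - a) / ((m : ℝ) + 1)) = (m.choose j : ℝ) * (t - a) := by
                  rw [hkc]
                  field_simp
                linear_combination (-(a ^ (j + 1))) * pascal + (-(a ^ j)) * hfrac
            _ ≤ ((m + 1).choose (j + 1) : ℝ) * X ^ (j + 1) := h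
        -- conclude
        have hXpow : ((m : ℝ) + 1) ^ (j + 1) * X ^ (j + 1) = ((m : ℝ) * a + t) ^ (j + 1) := by
          rw [hX, ← mul_pow]
          congr 1
          field_simp
        have hE : E1 + t * E0 ≤ (m.choose (j + 1) : ℝ) * a ^ (j + 1)
            + t * ((m.choose j : ℝ) * a ^ j) := by
          have := mul_le_mul_of_nonneg_left b0 ht0
          linarith
        have final := le_trans hE key
        have := mul_le_mul_of_nonneg_left final
          (show (0:ℝ) ≤ ((m : ℝ) + 1) ^ (j + 1) from pow_nonneg (by linarith) _)
        push_cast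
        calc ((m : ℝ) + 1) ^ (j + 1) * (E1 + t * E0)
            ≤ ((m : ℝ) + 1) ^ (j + 1) * (((m + 1).choose (j + 1) : ℝ) * X ^ (j + 1)) := this
          _ = ((m + 1).choose (j + 1) : ℝ) * (((m : ℝ) + 1) ^ (j + 1) * X ^ (j + 1)) := by ring
          _ = ((m + 1).choose (j + 1) : ℝ) * ((m : ℝ) * a + t) ^ (j + 1) := by rw [hXpow]
          _ = ((m + 1).choose (j + 1) : ℝ) * (t + ss) ^ (j + 1) := by
              rw [hssa]; ring_nf

/-- Fast screening bound: the BIS log-likelihood ratio is at most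
`k · log((1/T) Σᵢ wᵢ)` with `wᵢ = exp((2yᵢ−1)/(2σ²))`. -/
theorem bis_screening_bound (T k : ℕ) (hT : 0 < T) (hk : k ≤ T)
    (σ : ℝ) (hσ : 0 < σ) (y : Fin T → ℝ) (w : Fin T → ℝ)
    (hw : w = fun i => Real.exp ((2 * y i - 1) / (2 * σ ^ 2))) :
    Real.log ((1 / (T.choose k : ℝ)) *
        ∑ S ∈ (Finset.univ : Finset (Fin T)).powersetCard k, ∏ i ∈ S, w i)
      ≤ (k : ℝ) * Real.log ((1 / (T : ℝ)) * ∑ i, w i) := by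
  have hwpos : ∀ i, 0 < w i := by
    intro i; rw [hw]; exact Real.exp_pos _
  set E := ∑ S ∈ (Finset.univ : Finset (Fin T)).powersetCard k, ∏ i ∈ S, w i with hE
  set Ssum := ∑ i, w i with hS
  have hcard : (Finset.univ : Finset (Fin T)).card = T := Finset.card_univ.trans (Fintype.card_fin T)
  have hEpos : 0 < E := by
    apply Finset.sum_pos
    · intro A _
      exact Finset.prod_pos fun i _ => hwpos i
    · apply Finset.powersetCard_nonempty_of_le
      rw [hcard]; exact hk
  have hSpos : 0 < Ssum := by
    apply Finset.sum_pos (fun i _ => hwpos i)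
    exact Finset.univ_nonempty_iff.mpr ⟨⟨0, hT⟩⟩
  have hCpos : (0 : ℝ) < (T.choose k : ℝ) := by
    exact_mod_cast Nat.choose_pos hk
  have hTpos : (0 : ℝ) < (T : ℝ) := by exact_mod_cast hT
  have mac := maclaurin_aux w (fun i => (hwpos i).le) (Finset.univ : Finset (Fin T)) k
  rw [hcard] at mac
  -- mac : T^k * E ≤ C(T,k) * Ssum^k
  have harg : (1 / (T.choose k : ℝ)) * E ≤ ((1 / (T : ℝ)) * Ssum) ^ k := by
    have h1 : ((1 / (T : ℝ)) * Ssum) ^ k = Ssum ^ k / (T : ℝ) ^ k := by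
      rw [one_div, inv_mul_eq_div, div_pow]
    rw [h1, one_div, inv_mul_eq_div, div_le_div_iff₀ hCpos (pow_pos hTpos k), hE, hS]
    calc (∑ S ∈ (Finset.univ : Finset (Fin T)).powersetCard k, ∏ i ∈ S, w i) * (T : ℝ) ^ k
        = (T : ℝ) ^ k * ∑ S ∈ (Finset.univ : Finset (Fin T)).powersetCard k, ∏ i ∈ S, w i :=
          mul_comm _ _
      _ ≤ (T.choose k : ℝ) * (∑ i, w i) ^ k := mac
      _ = (∑ i, w i) ^ k * (T.choose k : ℝ) := mul_comm _ _
  have hlog := Real.log_le_log (by positivity) harg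
  calc Real.log ((1 / (T.choose k : ℝ)) * E)
      ≤ Real.log (((1 / (T : ℝ)) * Ssum) ^ k) := hlog
    _ = (k : ℝ) * Real.log ((1 / (T : ℝ)) * Ssum) := by
        rw [Real.log_pow]
end
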